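/- arXiv:1602.05441 — 3 statements merged into one kernel-verified Lean document; each statement's English description precedes it below -/
import Mathlib

section
/- Let H be a Hopf algebra over a field k with bijective antipode, and let A, B be left H-modules. The flip map x ⊗ y ↦ y ⊗ x restricts to a k-linear isomorphism between the space of H-invariants (A ⊗ B)^H (with diagonal action) and the space of H-invariants (B^# ⊗ A)^H, where B^# is B with the H-action twisted by S^{-2}, i.e. h ·_{#} b = S^{-2}(h)·b, and B^# ⊗ A carries the diagonal action of these twisted/untwisted actions. -/
open TensorProduct

noncomputable section

variable (k : Type) [Field k]
variable (H : Type) [Ring H] [HopfAlgebra k H]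

/-- The action of `H` on a left `H`-module `M`, as a `k`-bilinear map. -/
def smulL (M : Type) [AddCommGroup M] [Module k M] [Module H M]
    [IsScalarTower k H M] [SMulCommClass k H M] : H →ₗ[k] M →ₗ[k] M where
  toFun h :=
    { toFun := fun m => h • m
      map_add' := fun _ _ => smul_add _ _ _
      map_smul' := fun c m => (smul_comm c h m).symm }
  map_add' := fun a b => LinearMap.ext fun m => add_smul a b m
  map_smul' := fun c a => LinearMap.ext fun m => smul_assoc c a m

/-- The action of `H` on `M` as a linear map `H ⊗ M → M`. -/
def actM (M : Type) [AddCommGroup M] [Module k M] [Module H M]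
    [IsScalarTower k H M] [SMulCommClass k H M] : H ⊗[k] M →ₗ[k] M :=
  TensorProduct.lift (smulL k H M)

/-- The diagonal action on a tensor product, built from two `k`-bilinear actions
via comultiplication: `h ↦ (x ⊗ y ↦ α(h₍₁₎)(x) ⊗ β(h₍₂₎)(y))`. -/
def diagAct {X Y : Type} [AddCommGroup X] [Module k X] [AddCommGroup Y] [Module k Y]
    (α : H →ₗ[k] X →ₗ[k] X) (β : H →ₗ[k] Y →ₗ[k] Y) :
    H →ₗ[k] (X ⊗[k] Y →ₗ[k] X ⊗[k] Y) :=
  (TensorProduct.homTensorHomMap (RingHom.id k) X Y X Y) ∘ₗ (TensorProduct.map α β) ∘ₗ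
    (Coalgebra.comul (R := k) (A := H))

/-- Given `f : H ⊗ M → M ⊗ H` and `s : H → H`, the map
`h ⊗ m ↦ f(h₍₂₎ ⊗ m)₍M₎ ⊗ f(h₍₂₎ ⊗ m)₍H₎ * s(h₍₁₎)`
(in Sweedler notation, e.g. `(h₍₂₎m)₍₀₎ ⊗ (h₍₂₎m)₍₁₎ s(h₍₁₎)` when `f = ρ ∘ act`). -/
def twistR {M : Type} [AddCommGroup M] [Module k M]
    (f : H ⊗[k] M →ₗ[k] M ⊗[k] H) (s : H →ₗ[k] H) : H ⊗[k] M →ₗ[k] M ⊗[k] H :=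
  (LinearMap.lTensor M (LinearMap.mul' k H)) ∘ₗ
  (TensorProduct.assoc k M H H).toLinearMap ∘ₗ
  (TensorProduct.comm k H (M ⊗[k] H)).toLinearMap ∘ₗ
  (TensorProduct.map s f) ∘ₗ
  (TensorProduct.assoc k H H M).toLinearMap ∘ₗ
  (LinearMap.rTensor M (Coalgebra.comul (R := k) (A := H)))

/-- The map `h ⊗ m ↦ h₍₁₎·m₍₀₎ ⊗ h₍₂₎·m₍₁₎`. -/
def ydR {M : Type} [AddCommGroup M] [Module k M]
    (act : H ⊗[k] M →ₗ[k] M) (ρ : M →ₗ[k] M ⊗[k] H) : H ⊗[k] M →ₗ[k] M ⊗[k] H :=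
  (TensorProduct.map act (LinearMap.mul' k H)) ∘ₗ
  (TensorProduct.tensorTensorTensorComm k H H M H).toLinearMap ∘ₗ
  (TensorProduct.map (Coalgebra.comul (R := k) (A := H)) ρ)

/-- The map `Φ : V ⊗ M → M ⊗ V`, `v ⊗ m ↦ m₍₀₎ ⊗ m₍₁₎·v`. -/
def PhiMap {M V : Type} [AddCommGroup M] [Module k M] [AddCommGroup V] [Module k V]
    (ρ : M →ₗ[k] M ⊗[k] H) (actV : H ⊗[k] V →ₗ[k] V) : V ⊗[k] M →ₗ[k] M ⊗[k] V :=
  (LinearMap.lTensor M actV) ∘ₗ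
  (TensorProduct.assoc k M H V).toLinearMap ∘ₗ
  (LinearMap.rTensor V ρ) ∘ₗ
  (TensorProduct.comm k V M).toLinearMap

/-- The map `m ↦ s(m₍₁₎)·m₍₀₎`. -/
def stabMap {M : Type} [AddCommGroup M] [Module k M] [Module H M]
    [IsScalarTower k H M] [SMulCommClass k H M]
    (ρ : M →ₗ[k] M ⊗[k] H) (s : H →ₗ[k] H) : M →ₗ[k] M :=
  (actM k H M) ∘ₗ (LinearMap.rTensor M s) ∘ₗ (TensorProduct.comm k M H).toLinearMap ∘ₗ ρ

/-- The map `M ⊗ V → M ⊗ V`, `m ⊗ v ↦ m₍₀₎ ⊗ s(m₍₁₎)·v`. -/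
def tauZero {M V : Type} [AddCommGroup M] [Module k M] [AddCommGroup V] [Module k V]
    (ρ : M →ₗ[k] M ⊗[k] H) (actV : H ⊗[k] V →ₗ[k] V) (s : H →ₗ[k] H) :
    M ⊗[k] V →ₗ[k] M ⊗[k] V :=
  (LinearMap.lTensor M (actV ∘ₗ LinearMap.rTensor V s)) ∘ₗ
  (TensorProduct.assoc k M H V).toLinearMap ∘ₗ
  (LinearMap.rTensor V ρ)

end

namespace Statement4Aux

open TensorProduct LinearMap Coalgebra HopfAlgebra

variable {k : Type} [Field k] {H : Type} [Ring H] [HopfAlgebra k H]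


variable {k : Type} [Field k] {H : Type} [Ring H] [HopfAlgebra k H]
variable {C : Type} [AddCommGroup C] [Module k C] [Coalgebra k C]
variable {ι : Type*}

noncomputable def conv (f g : C →ₗ[k] H) : C →ₗ[k] H :=
  LinearMap.mul' k H ∘ₗ TensorProduct.map f g ∘ₗ Coalgebra.comul

lemma conv_repr (f g : C →ₗ[k] H) {c : C} (r : Coalgebra.Repr k c ι) :
    conv f g c = ∑ i ∈ r.index, f (r.left i) * g (r.right i) := by
  rw [conv, LinearMap.comp_apply, LinearMap.comp_apply, ← r.eq]
  simp [map_sum]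

noncomputable def convUnit : C →ₗ[k] H := Algebra.linearMap k H ∘ₗ Coalgebra.counit

lemma convUnit_apply (c : C) : (convUnit (k:=k) (H:=H) c) = algebraMap k H (Coalgebra.counit c) := rfl

lemma sum_counit_smul {h : C} (r : Coalgebra.Repr k h ι) :
    ∑ i ∈ r.index, Coalgebra.counit (R := k) (r.left i) • r.right i = h := by
  have := congrArg (TensorProduct.lid k C) (Coalgebra.sum_counit_tmul_eq (R:=k) r)
  simpa [-Coalgebra.sum_counit_tmul_eq, map_sum] using this

lemma sum_smul_counit {h : C} (r : Coalgebra.Repr k h ι) :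
    ∑ i ∈ r.index, Coalgebra.counit (R := k) (r.right i) • r.left i = h := by
  have := congrArg (TensorProduct.rid k C) (Coalgebra.sum_tmul_counit_eq (R:=k) r)
  simpa [-Coalgebra.sum_tmul_counit_eq, map_sum] using this

lemma conv_convUnit_left (f : C →ₗ[k] H) : conv convUnit f = f := by
  apply LinearMap.ext; intro c
  rw [conv_repr _ _ (ℛ k c)]
  have : ∀ i ∈ (ℛ k c).index, convUnit (k:=k) (H:=H) ((ℛ k c).left i) * f ((ℛ k c).right i)
      = f (Coalgebra.counit (R := k) ((ℛ k c).left i) • (ℛ k c).right i) := by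
    intro i _
    rw [convUnit_apply, map_smul, Algebra.smul_def]
  rw [Finset.sum_congr rfl this, ← map_sum, sum_counit_smul]

lemma conv_convUnit_right (f : C →ₗ[k] H) : conv f convUnit = f := by
  apply LinearMap.ext; intro c
  rw [conv_repr _ _ (ℛ k c)]
  have : ∀ i ∈ (ℛ k c).index, f ((ℛ k c).left i) * convUnit (k:=k) (H:=H) ((ℛ k c).right i)
      = f (Coalgebra.counit (R := k) ((ℛ k c).right i) • (ℛ k c).left i) := by
    intro i _
    rw [convUnit_apply, map_smul, Algebra.smul_def, ← Algebra.commutes]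
  rw [Finset.sum_congr rfl this, ← map_sum, sum_smul_counit]

lemma conv_assoc (f g w : C →ₗ[k] H) : conv (conv f g) w = conv f (conv g w) := by
  apply LinearMap.ext; intro c
  have key := congrArg ((LinearMap.mul' k H) ∘ₗ lTensor H (LinearMap.mul' k H)
      ∘ₗ TensorProduct.map f (TensorProduct.map g w))
    (Coalgebra.sum_tmul_tmul_eq (ℛ k c) (fun i => ℛ k ((ℛ k c).left i))
      (fun i => ℛ k ((ℛ k c).right i)))
  simp only [map_sum, LinearMap.comp_apply, TensorProduct.map_tmul, lTensor_tmul,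
    LinearMap.mul'_apply] at key
  rw [conv_repr (conv f g) w (ℛ k c), conv_repr f (conv g w) (ℛ k c)]
  calc ∑ i ∈ (ℛ k c).index, conv f g ((ℛ k c).left i) * w ((ℛ k c).right i)
      = ∑ i ∈ (ℛ k c).index, ∑ j ∈ (ℛ k ((ℛ k c).left i)).index,
          f ((ℛ k ((ℛ k c).left i)).left j) *
            (g ((ℛ k ((ℛ k c).left i)).right j) * w ((ℛ k c).right i)) := by
        refine Finset.sum_congr rfl fun i _ => ?_
        rw [conv_repr f g (ℛ k ((ℛ k c).left i)), Finset.sum_mul]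
        exact Finset.sum_congr rfl fun j _ => mul_assoc _ _ _
    _ = ∑ i ∈ (ℛ k c).index, ∑ j ∈ (ℛ k ((ℛ k c).right i)).index,
          f ((ℛ k c).left i) *
            (g ((ℛ k ((ℛ k c).right i)).left j) * w ((ℛ k ((ℛ k c).right i)).right j)) := key
    _ = ∑ i ∈ (ℛ k c).index, f ((ℛ k c).left i) * conv g w ((ℛ k c).right i) := by
        refine Finset.sum_congr rfl fun i _ => ?_
        rw [conv_repr g w (ℛ k ((ℛ k c).right i)), Finset.mul_sum]

noncomputable def tmulRepr (a b : H) : Coalgebra.Repr k (a ⊗ₜ[k] b : H ⊗[k] H) ((H × H) × (H × H)) where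
  index := (ℛ k a).index ×ˢ (ℛ k b).index
  left := fun p => (ℛ k a).left p.1 ⊗ₜ[k] (ℛ k b).left p.2
  right := fun p => (ℛ k a).right p.1 ⊗ₜ[k] (ℛ k b).right p.2
  eq := by
    have : Coalgebra.comul (R := k) (a ⊗ₜ[k] b)
        = TensorProduct.tensorTensorTensorComm k H H H H
            (TensorProduct.map Coalgebra.comul Coalgebra.comul (a ⊗ₜ[k] b)) := rfl
    rw [this, TensorProduct.map_tmul, ← (ℛ k a).eq, ← (ℛ k b).eq, TensorProduct.sum_tmul,
      map_sum, Finset.sum_product]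
    refine Finset.sum_congr rfl fun i _ => ?_
    rw [TensorProduct.tmul_sum, map_sum]
    exact Finset.sum_congr rfl fun j _ => by rw [TensorProduct.tensorTensorTensorComm_tmul]

noncomputable def mulRepr (a b : H) : Coalgebra.Repr k (a * b : H) ((H × H) × (H × H)) where
  index := (ℛ k a).index ×ˢ (ℛ k b).index
  left := fun p => (ℛ k a).left p.1 * (ℛ k b).left p.2
  right := fun p => (ℛ k a).right p.1 * (ℛ k b).right p.2
  eq := by
    rw [Bialgebra.comul_mul, ← (ℛ k a).eq, ← (ℛ k b).eq, Finset.sum_mul_sum,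
      Finset.sum_product]
    exact Finset.sum_congr rfl fun i _ => Finset.sum_congr rfl fun j _ =>
      (Algebra.TensorProduct.tmul_mul_tmul _ _ _ _).symm

-- convolution identities for the three maps on H ⊗ H
lemma conv_SM_M (a b : H) :
    conv (HopfAlgebra.antipode (R := k) ∘ₗ LinearMap.mul' k H) (LinearMap.mul' k H) (a ⊗ₜ[k] b)
      = algebraMap k H (Coalgebra.counit (R := k) (a ⊗ₜ[k] b)) := by
  rw [conv_repr _ _ (tmulRepr a b)]
  have h2 := HopfAlgebra.sum_antipode_mul_eq_algebraMap_counit (R := k) (mulRepr a b)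
  have : ∀ p ∈ (tmulRepr (k := k) a b).index,
      (HopfAlgebra.antipode (R := k) ∘ₗ LinearMap.mul' k H) ((tmulRepr (k := k) a b).left p) *
        (LinearMap.mul' k H) ((tmulRepr (k := k) a b).right p)
      = HopfAlgebra.antipode (R := k) ((mulRepr (k := k) a b).left p) * (mulRepr (k := k) a b).right p := by
    intro p _
    simp [tmulRepr, mulRepr]
  rw [Finset.sum_congr rfl this]
  exact h2.trans (by rw [Bialgebra.counit_mul, TensorProduct.counit_tmul, smul_eq_mul, mul_comm])

lemma conv_M_K (a b : H) :
    conv (LinearMap.mul' k H)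
      (LinearMap.mul' k H ∘ₗ TensorProduct.map (HopfAlgebra.antipode (R := k))
        (HopfAlgebra.antipode (R := k)) ∘ₗ (TensorProduct.comm k H H).toLinearMap)
      (a ⊗ₜ[k] b) = algebraMap k H (Coalgebra.counit (R := k) (a ⊗ₜ[k] b)) := by
  rw [conv_repr _ _ (tmulRepr a b)]
  show ∑ p ∈ (ℛ k a).index ×ˢ (ℛ k b).index,
      (LinearMap.mul' k H) ((ℛ k a).left p.1 ⊗ₜ[k] (ℛ k b).left p.2) *
        ((LinearMap.mul' k H ∘ₗ TensorProduct.map (HopfAlgebra.antipode (R := k))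
          (HopfAlgebra.antipode (R := k)) ∘ₗ (TensorProduct.comm k H H).toLinearMap)
          ((ℛ k a).right p.1 ⊗ₜ[k] (ℛ k b).right p.2)) = _
  rw [Finset.sum_product]
  have inner : ∀ i ∈ (ℛ k a).index,
      (∑ j ∈ (ℛ k b).index,
        (LinearMap.mul' k H) ((ℛ k a).left i ⊗ₜ[k] (ℛ k b).left j) *
          ((LinearMap.mul' k H ∘ₗ TensorProduct.map (HopfAlgebra.antipode (R := k))
            (HopfAlgebra.antipode (R := k)) ∘ₗ (TensorProduct.comm k H H).toLinearMap)
            ((ℛ k a).right i ⊗ₜ[k] (ℛ k b).right j)))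
      = Coalgebra.counit (R := k) b •
          ((ℛ k a).left i * HopfAlgebra.antipode (R := k) ((ℛ k a).right i)) := by
    intro i _
    have term : ∀ j ∈ (ℛ k b).index,
        (LinearMap.mul' k H) ((ℛ k a).left i ⊗ₜ[k] (ℛ k b).left j) *
          ((LinearMap.mul' k H ∘ₗ TensorProduct.map (HopfAlgebra.antipode (R := k))
            (HopfAlgebra.antipode (R := k)) ∘ₗ (TensorProduct.comm k H H).toLinearMap)
            ((ℛ k a).right i ⊗ₜ[k] (ℛ k b).right j))
        = ((ℛ k a).left i * ((ℛ k b).left j * HopfAlgebra.antipode (R := k) ((ℛ k b).right j))) *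
            HopfAlgebra.antipode (R := k) ((ℛ k a).right i) := by
      intro j _
      show ((ℛ k a).left i * (ℛ k b).left j) *
          (HopfAlgebra.antipode (R := k) ((ℛ k b).right j) *
            HopfAlgebra.antipode (R := k) ((ℛ k a).right i)) = _
      rw [mul_assoc, ← mul_assoc ((ℛ k b).left j), ← mul_assoc]
    rw [Finset.sum_congr rfl term, ← Finset.sum_mul, ← Finset.mul_sum,
      HopfAlgebra.sum_mul_antipode_eq_algebraMap_counit (R := k) (ℛ k b), ← Algebra.commutes, ← Algebra.smul_def,
      smul_mul_assoc]
  rw [Finset.sum_congr rfl inner, ← Finset.smul_sum,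
    HopfAlgebra.sum_mul_antipode_eq_algebraMap_counit (R := k) (ℛ k a), Algebra.smul_def, ← map_mul]
  show algebraMap k H (Coalgebra.counit (R := k) b * Coalgebra.counit (R := k) a) = _
  rw [mul_comm]
  rw [TensorProduct.counit_tmul, smul_eq_mul, mul_comm]

lemma antipode_one' : HopfAlgebra.antipode (R := k) (A := H) 1 = 1 := by
  have := mul_antipode_rTensor_comul_apply (R := k) (a := (1 : H))
  simpa [Algebra.TensorProduct.one_def] using this

lemma antipode_mul' (a b : H) :
    HopfAlgebra.antipode (R := k) (A := H) (a * b)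
      = HopfAlgebra.antipode (R := k) (A := H) b * HopfAlgebra.antipode (R := k) (A := H) a := by
  set S : H →ₗ[k] H := HopfAlgebra.antipode (R := k) with hSdef
  set κ : H ⊗[k] H →ₗ[k] H :=
    LinearMap.mul' k H ∘ₗ TensorProduct.map (HopfAlgebra.antipode (R := k))
      (HopfAlgebra.antipode (R := k)) ∘ₗ (TensorProduct.comm k H H).toLinearMap with hκ
  have h1 : conv (S ∘ₗ LinearMap.mul' k H) (LinearMap.mul' k H) = convUnit :=
    TensorProduct.ext' fun a b => conv_SM_M a b
  have h2 : conv (LinearMap.mul' k H) κ = convUnit :=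
    TensorProduct.ext' fun a b => conv_M_K a b
  have key : (S ∘ₗ LinearMap.mul' k H) = κ := by
    calc S ∘ₗ LinearMap.mul' k H
        = conv (S ∘ₗ LinearMap.mul' k H) convUnit := (conv_convUnit_right _).symm
      _ = conv (S ∘ₗ LinearMap.mul' k H) (conv (LinearMap.mul' k H) κ) := by rw [h2]
      _ = conv (conv (S ∘ₗ LinearMap.mul' k H) (LinearMap.mul' k H)) κ := (conv_assoc _ _ _).symm
      _ = conv convUnit κ := by rw [h1]
      _ = κ := conv_convUnit_left _
  have := LinearMap.congr_fun key (a ⊗ₜ[k] b)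
  simpa [hκ, hSdef] using this

lemma sum_invAntipode_mul (S : H ≃ₗ[k] H)
    (hS : ∀ h : H, S h = HopfAlgebra.antipode (R := k) h)
    (h : H) (r : Coalgebra.Repr k h ι) :
    ∑ i ∈ r.index, S.symm (r.right i) * r.left i
      = Coalgebra.counit (R := k) h • (1 : H) := by
  apply S.injective
  rw [map_sum]
  have : ∀ i ∈ r.index, S (S.symm (r.right i) * r.left i)
      = HopfAlgebra.antipode (R := k) (r.left i) * r.right i := by
    intro i _
    rw [hS, antipode_mul']
    congr 1
    rw [← hS, S.apply_symm_apply]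
  rw [Finset.sum_congr rfl this, HopfAlgebra.sum_antipode_mul_eq_algebraMap_counit (R := k) r, map_smul, hS,
    antipode_one', Algebra.algebraMap_eq_smul_one]

lemma sum_mul_invAntipode (S : H ≃ₗ[k] H)
    (hS : ∀ h : H, S h = HopfAlgebra.antipode (R := k) h)
    (h : H) (r : Coalgebra.Repr k h ι) :
    ∑ i ∈ r.index, r.right i * S.symm (r.left i)
      = Coalgebra.counit (R := k) h • (1 : H) := by
  apply S.injective
  rw [map_sum]
  have : ∀ i ∈ r.index, S (r.right i * S.symm (r.left i))
      = r.left i * HopfAlgebra.antipode (R := k) (r.right i) := by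
    intro i _
    rw [hS, antipode_mul']
    congr 1
    rw [← hS, S.apply_symm_apply]
  rw [Finset.sum_congr rfl this, HopfAlgebra.sum_mul_antipode_eq_algebraMap_counit (R := k) r, map_smul, hS,
    antipode_one', Algebra.algebraMap_eq_smul_one]

lemma diagAct_repr {A B : Type} [AddCommGroup A] [Module k A] [AddCommGroup B] [Module k B]
    (α : H →ₗ[k] A →ₗ[k] A) (β : H →ₗ[k] B →ₗ[k] B) {h : H} (r : Coalgebra.Repr k h ι)
    (z : A ⊗[k] B) :
    diagAct k H α β h z
      = ∑ i ∈ r.index, TensorProduct.map (α (r.left i)) (β (r.right i)) z := by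
  rw [diagAct, LinearMap.comp_apply, LinearMap.comp_apply, ← r.eq, map_sum, map_sum,
    LinearMap.sum_apply]
  exact Finset.sum_congr rfl fun i _ => by
    rw [TensorProduct.map_tmul, TensorProduct.homTensorHomMap_apply]


theorem key_lemma {A B : Type} [AddCommGroup A] [Module k A] [AddCommGroup B] [Module k B]
    (α : H →ₗ[k] A →ₗ[k] A) (β : H →ₗ[k] B →ₗ[k] B)
    (hα1 : α 1 = LinearMap.id) (hαm : ∀ g g' : H, α (g * g') = α g ∘ₗ α g')
    (hβ1 : β 1 = LinearMap.id) (hβm : ∀ g g' : H, β (g * g') = β g ∘ₗ β g')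
    (S : H ≃ₗ[k] H)
    (hG1 : ∀ h : H,
      ∑ i ∈ (ℛ k h).index, S.symm ((ℛ k h).right i) * (ℛ k h).left i
        = Coalgebra.counit (R := k) h • (1 : H))
    (hG2 : ∀ h : H,
      ∑ i ∈ (ℛ k h).index, (ℛ k h).right i * S.symm ((ℛ k h).left i)
        = Coalgebra.counit (R := k) h • (1 : H))
    (x : A ⊗[k] B)
    (hx : ∀ h : H, diagAct k H α β h x = Coalgebra.counit (R := k) h • x) :
    ∀ h : H,
      ∑ i ∈ (ℛ k h).index,
        TensorProduct.map (α ((ℛ k h).right i)) (β (S.symm (S.symm ((ℛ k h).left i)))) x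
        = Coalgebra.counit (R := k) h • x := by
  have hA : ∀ g : H, LinearMap.rTensor B (α g) x = LinearMap.lTensor A (β (S.symm g)) x := by
    intro g
    set r := ℛ k g with hr
    set X1 := ∑ i ∈ r.index,
      LinearMap.lTensor A (β (S.symm (r.right i))) (diagAct k H α β (r.left i) x) with hX1
    have e1 : X1 = LinearMap.lTensor A (β (S.symm g)) x := by
      rw [hX1]
      have step : ∀ i ∈ r.index,
          LinearMap.lTensor A (β (S.symm (r.right i))) (diagAct k H α β (r.left i) x)
            = Coalgebra.counit (R := k) (r.left i) •
                (((LinearMap.lTensorHom A ∘ₗ β ∘ₗ S.symm.toLinearMap).flip x) (r.right i)) := by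
        intro i _; rw [hx, map_smul]; rfl
      rw [Finset.sum_congr rfl step]
      have : ∑ i ∈ r.index, Coalgebra.counit (R := k) (r.left i) •
            (((LinearMap.lTensorHom A ∘ₗ β ∘ₗ S.symm.toLinearMap).flip x) (r.right i))
          = ((LinearMap.lTensorHom A ∘ₗ β ∘ₗ S.symm.toLinearMap).flip x)
              (∑ i ∈ r.index, Coalgebra.counit (R := k) (r.left i) • r.right i) := by
        rw [map_sum]
        exact Finset.sum_congr rfl fun i _ =>
          (map_smul ((LinearMap.lTensorHom A ∘ₗ β ∘ₗ S.symm.toLinearMap).flip x) _ _).symm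
      rw [this, sum_counit_smul r]
      rfl
    have e2 : X1 = LinearMap.rTensor B (α g) x := by
      rw [hX1]
      -- expand diagAct with second-level representations
      have expand : ∀ i ∈ r.index,
          LinearMap.lTensor A (β (S.symm (r.right i))) (diagAct k H α β (r.left i) x)
            = ∑ j ∈ (ℛ k (r.left i)).index,
                TensorProduct.map (α ((ℛ k (r.left i)).left j))
                  (β (S.symm (r.right i) * (ℛ k (r.left i)).right j)) x := by
        intro i _
        rw [diagAct_repr α β (ℛ k (r.left i)) x, map_sum]
        refine Finset.sum_congr rfl fun j _ => ?_
        rw [← LinearMap.comp_apply, LinearMap.lTensor_comp_map, hβm]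
      rw [Finset.sum_congr rfl expand]
      -- coassociativity gadget
      have gadget := congrArg
        (((TensorProduct.homTensorHomMap (RingHom.id k) A B A B ∘ₗ
            TensorProduct.map α β ∘ₗ
            lTensor H ((LinearMap.mul' k H) ∘ₗ (TensorProduct.comm k H H).toLinearMap ∘ₗ
              lTensor H S.symm.toLinearMap)).flip) x)
        (Coalgebra.sum_tmul_tmul_eq r (fun i => ℛ k (r.left i)) (fun i => ℛ k (r.right i)))
      simp only [map_sum, LinearMap.flip_apply, LinearMap.comp_apply, lTensor_tmul,
        LinearEquiv.coe_coe, TensorProduct.comm_tmul, LinearMap.mul'_apply,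
        TensorProduct.map_tmul, TensorProduct.homTensorHomMap_apply] at gadget
      rw [gadget]
      -- collapse inner sums using hG1
      have collapse : ∀ i ∈ r.index,
          ∑ j ∈ (ℛ k (r.right i)).index,
            TensorProduct.map (α (r.left i))
              (β (S.symm ((ℛ k (r.right i)).right j) * (ℛ k (r.right i)).left j)) x
          = Coalgebra.counit (R := k) (r.right i) •
              LinearMap.rTensor B (α (r.left i)) x := by
        intro i _
        have : ∀ j ∈ (ℛ k (r.right i)).index,
            TensorProduct.map (α (r.left i))
              (β (S.symm ((ℛ k (r.right i)).right j) * (ℛ k (r.right i)).left j)) x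
            = ((LinearMap.lTensorHom A ∘ₗ β).flip (LinearMap.rTensor B (α (r.left i)) x))
                (S.symm ((ℛ k (r.right i)).right j) * (ℛ k (r.right i)).left j) := by
          intro j _
          rw [← LinearMap.lTensor_comp_rTensor]
          rfl
        rw [Finset.sum_congr rfl this, ← map_sum, hG1 (r.right i), map_smul]
        have : ((LinearMap.lTensorHom A ∘ₗ β).flip (LinearMap.rTensor B (α (r.left i)) x)) 1
            = LinearMap.rTensor B (α (r.left i)) x := by
          show LinearMap.lTensor A (β 1) _ = _
          rw [hβ1, LinearMap.lTensor_id]; rfl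
        rw [this]
      rw [Finset.sum_congr rfl collapse]
      have : ∑ i ∈ r.index, Coalgebra.counit (R := k) (r.right i) •
            LinearMap.rTensor B (α (r.left i)) x
          = ((LinearMap.rTensorHom B ∘ₗ α).flip x)
              (∑ i ∈ r.index, Coalgebra.counit (R := k) (r.right i) • r.left i) := by
        rw [map_sum]
        exact Finset.sum_congr rfl fun i _ =>
          (map_smul ((LinearMap.rTensorHom B ∘ₗ α).flip x) _ _).symm
      rw [this, sum_smul_counit r]
      rfl
    rw [← e2, e1]
  -- main computation
  intro h
  set r := ℛ k h with hr
  have step : ∀ i ∈ r.index,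
      TensorProduct.map (α (r.right i)) (β (S.symm (S.symm (r.left i)))) x
        = ((LinearMap.rTensorHom B ∘ₗ α).flip x) (r.right i * S.symm (r.left i)) := by
    intro i _
    rw [← LinearMap.rTensor_comp_lTensor]
    show LinearMap.rTensor B (α (r.right i)) (LinearMap.lTensor A (β (S.symm (S.symm (r.left i)))) x) = _
    rw [← hA (S.symm (r.left i))]
    rw [← LinearMap.comp_apply, ← LinearMap.rTensor_comp, ← hαm]
    rfl
  rw [Finset.sum_congr rfl step, ← map_sum, hG2 h, map_smul]
  show Coalgebra.counit (R := k) h • LinearMap.rTensor B (α 1) x = _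
  rw [hα1, LinearMap.rTensor_id]
  rfl

theorem back_lemma {A B : Type} [AddCommGroup A] [Module k A] [AddCommGroup B] [Module k B]
    (α : H →ₗ[k] A →ₗ[k] A) (β : H →ₗ[k] B →ₗ[k] B)
    (hα1 : α 1 = LinearMap.id) (hαm : ∀ g g' : H, α (g * g') = α g ∘ₗ α g')
    (S : H ≃ₗ[k] H) (hS : ∀ h : H, S h = HopfAlgebra.antipode (R := k) h)
    (hG1 : ∀ h : H,
      ∑ i ∈ (ℛ k h).index, S.symm ((ℛ k h).right i) * (ℛ k h).left i
        = Coalgebra.counit (R := k) h • (1 : H))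
    (x : A ⊗[k] B)
    (hy : ∀ h : H,
      ∑ i ∈ (ℛ k h).index,
        TensorProduct.map (α ((ℛ k h).right i)) (β (S.symm (S.symm ((ℛ k h).left i)))) x
        = Coalgebra.counit (R := k) h • x) :
    ∀ h : H, diagAct k H α β h x = Coalgebra.counit (R := k) h • x := by
  have mhA : ∀ g : H,
      LinearMap.rTensor B (α (S.symm g)) x
        = LinearMap.lTensor A (β (S.symm (S.symm g))) x := by
    intro g
    set r := ℛ k g with hr
    set X1 := ∑ i ∈ r.index, LinearMap.rTensor B (α (S.symm (r.right i)))
      (∑ j ∈ (ℛ k (r.left i)).index,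
        TensorProduct.map (α ((ℛ k (r.left i)).right j))
          (β (S.symm (S.symm ((ℛ k (r.left i)).left j)))) x) with hX1
    have e1 : X1 = LinearMap.rTensor B (α (S.symm g)) x := by
      rw [hX1]
      have step : ∀ i ∈ r.index,
          LinearMap.rTensor B (α (S.symm (r.right i)))
            (∑ j ∈ (ℛ k (r.left i)).index,
              TensorProduct.map (α ((ℛ k (r.left i)).right j))
                (β (S.symm (S.symm ((ℛ k (r.left i)).left j)))) x)
          = Coalgebra.counit (R := k) (r.left i) •
              (((LinearMap.rTensorHom B ∘ₗ α ∘ₗ S.symm.toLinearMap).flip x) (r.right i)) := by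
        intro i _
        rw [hy (r.left i), map_smul]
        rfl
      rw [Finset.sum_congr rfl step]
      have : ∑ i ∈ r.index, Coalgebra.counit (R := k) (r.left i) •
            (((LinearMap.rTensorHom B ∘ₗ α ∘ₗ S.symm.toLinearMap).flip x) (r.right i))
          = ((LinearMap.rTensorHom B ∘ₗ α ∘ₗ S.symm.toLinearMap).flip x)
              (∑ i ∈ r.index, Coalgebra.counit (R := k) (r.left i) • r.right i) := by
        rw [map_sum]
        exact Finset.sum_congr rfl fun i _ =>
          (map_smul ((LinearMap.rTensorHom B ∘ₗ α ∘ₗ S.symm.toLinearMap).flip x) _ _).symm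
      rw [this, sum_counit_smul r]
      rfl
    have e2 : X1 = LinearMap.lTensor A (β (S.symm (S.symm g))) x := by
      rw [hX1]
      have expand : ∀ i ∈ r.index,
          LinearMap.rTensor B (α (S.symm (r.right i)))
            (∑ j ∈ (ℛ k (r.left i)).index,
              TensorProduct.map (α ((ℛ k (r.left i)).right j))
                (β (S.symm (S.symm ((ℛ k (r.left i)).left j)))) x)
          = ∑ j ∈ (ℛ k (r.left i)).index,
              TensorProduct.map (α (S.symm (r.right i) * (ℛ k (r.left i)).right j))
                (β (S.symm (S.symm ((ℛ k (r.left i)).left j)))) x := by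
        intro i _
        rw [map_sum]
        refine Finset.sum_congr rfl fun j _ => ?_
        rw [← LinearMap.comp_apply, LinearMap.rTensor_comp_map, hαm]
      rw [Finset.sum_congr rfl expand]
      have gadget := congrArg
        (((TensorProduct.homTensorHomMap (RingHom.id k) A B A B ∘ₗ
            TensorProduct.map α β ∘ₗ
            TensorProduct.map
              ((LinearMap.mul' k H) ∘ₗ (TensorProduct.comm k H H).toLinearMap ∘ₗ lTensor H S.symm.toLinearMap)
              (S.symm.toLinearMap ∘ₗ S.symm.toLinearMap) ∘ₗ
            (TensorProduct.comm k H (H ⊗[k] H)).toLinearMap).flip) x)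
        (Coalgebra.sum_tmul_tmul_eq r (fun i => ℛ k (r.left i)) (fun i => ℛ k (r.right i)))
      simp only [map_sum, LinearMap.flip_apply, LinearMap.comp_apply, lTensor_tmul,
        LinearEquiv.coe_coe, TensorProduct.comm_tmul, LinearMap.mul'_apply,
        TensorProduct.map_tmul, TensorProduct.homTensorHomMap_apply] at gadget
      rw [gadget]
      have collapse : ∀ i ∈ r.index,
          ∑ j ∈ (ℛ k (r.right i)).index,
            TensorProduct.map (α (S.symm ((ℛ k (r.right i)).right j) * (ℛ k (r.right i)).left j))
              (β (S.symm (S.symm (r.left i)))) x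
          = Coalgebra.counit (R := k) (r.right i) •
              LinearMap.lTensor A (β (S.symm (S.symm (r.left i)))) x := by
        intro i _
        have : ∀ j ∈ (ℛ k (r.right i)).index,
            TensorProduct.map (α (S.symm ((ℛ k (r.right i)).right j) * (ℛ k (r.right i)).left j))
              (β (S.symm (S.symm (r.left i)))) x
            = ((LinearMap.rTensorHom B ∘ₗ α).flip
                (LinearMap.lTensor A (β (S.symm (S.symm (r.left i)))) x))
                (S.symm ((ℛ k (r.right i)).right j) * (ℛ k (r.right i)).left j) := by
          intro j _
          rw [← LinearMap.rTensor_comp_lTensor]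
          rfl
        rw [Finset.sum_congr rfl this, ← map_sum]
        rw [hG1 (r.right i), map_smul]
        have : ((LinearMap.rTensorHom B ∘ₗ α).flip
            (LinearMap.lTensor A (β (S.symm (S.symm (r.left i)))) x)) 1
            = LinearMap.lTensor A (β (S.symm (S.symm (r.left i)))) x := by
          show LinearMap.rTensor B (α 1) _ = _
          rw [hα1, LinearMap.rTensor_id]
          rfl
        rw [this]
      rw [Finset.sum_congr rfl collapse]
      have : ∑ i ∈ r.index, Coalgebra.counit (R := k) (r.right i) •
            LinearMap.lTensor A (β (S.symm (S.symm (r.left i)))) x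
          = ((LinearMap.lTensorHom A ∘ₗ β ∘ₗ S.symm.toLinearMap ∘ₗ S.symm.toLinearMap).flip x)
              (∑ i ∈ r.index, Coalgebra.counit (R := k) (r.right i) • r.left i) := by
        rw [map_sum]
        exact Finset.sum_congr rfl fun i _ =>
          (map_smul ((LinearMap.lTensorHom A ∘ₗ β ∘ₗ S.symm.toLinearMap ∘ₗ S.symm.toLinearMap).flip x) _ _).symm
      rw [this, sum_smul_counit r]
      rfl
    rw [← e1, e2]
  have hRL : ∀ g : H, LinearMap.lTensor A (β g) x
      = LinearMap.rTensor B (α (S g)) x := by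
    intro g
    have := mhA (S (S g))
    rw [S.symm_apply_apply, S.symm_apply_apply] at this
    exact this.symm
  intro h
  rw [diagAct_repr α β (ℛ k h) x]
  have step : ∀ i ∈ (ℛ k h).index,
      TensorProduct.map (α ((ℛ k h).left i)) (β ((ℛ k h).right i)) x
        = ((LinearMap.rTensorHom B ∘ₗ α).flip x)
            ((ℛ k h).left i * HopfAlgebra.antipode (R := k) ((ℛ k h).right i)) := by
    intro i _
    rw [← LinearMap.rTensor_comp_lTensor]
    show LinearMap.rTensor B (α ((ℛ k h).left i))
        (LinearMap.lTensor A (β ((ℛ k h).right i)) x) = _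
    rw [hRL ((ℛ k h).right i), ← LinearMap.comp_apply, ← LinearMap.rTensor_comp, ← hαm, hS]
    rfl
  rw [Finset.sum_congr rfl step, ← map_sum, HopfAlgebra.sum_mul_antipode_eq_smul (R := k) (ℛ k h),
    map_smul]
  show Coalgebra.counit (R := k) h • LinearMap.rTensor B (α 1) x = _
  rw [hα1, LinearMap.rTensor_id]
  rfl

end Statement4Aux

open Coalgebra in
/-- the flip `x ⊗ y ↦ y ⊗ x` is a bijection between `(A ⊗ B)^H` and
`(B^# ⊗ A)^H`, where `B^#` carries the action twisted by `S^{-2}`. -/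
theorem statement4
    (k : Type) [Field k] (H : Type) [Ring H] [HopfAlgebra k H]
    (S : H ≃ₗ[k] H) (hS : ∀ h : H, S h = HopfAlgebra.antipode (R := k) h)
    (A : Type) [AddCommGroup A] [Module k A] [Module H A]
    [IsScalarTower k H A] [SMulCommClass k H A]
    (B : Type) [AddCommGroup B] [Module k B] [Module H B]
    [IsScalarTower k H B] [SMulCommClass k H B]
    (x : A ⊗[k] B) :
    (∀ h : H, diagAct k H (smulL k H A) (smulL k H B) h x = Coalgebra.counit (R := k) h • x) ↔
    (∀ h : H,
        diagAct k H ((smulL k H B) ∘ₗ (S ^ (-2 : ℤ)).toLinearMap) (smulL k H A) h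
            ((TensorProduct.comm k A B) x) =
          Coalgebra.counit (R := k) h • ((TensorProduct.comm k A B) x)) := by
  classical
  set α := smulL k H A with hαdef
  set β := smulL k H B with hβdef
  have hα1 : α 1 = LinearMap.id := LinearMap.ext fun a => one_smul H a
  have hαm : ∀ g g' : H, α (g * g') = α g ∘ₗ α g' :=
    fun g g' => LinearMap.ext fun a => mul_smul g g' a
  have hβ1 : β 1 = LinearMap.id := LinearMap.ext fun b => one_smul H b
  have hβm : ∀ g g' : H, β (g * g') = β g ∘ₗ β g' :=
    fun g g' => LinearMap.ext fun b => mul_smul g g' b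
  have hP : ∀ g : H, (S ^ (-2 : ℤ)).toLinearMap g = S.symm (S.symm g) := by
    intro g
    have h1 : S ^ (-2 : ℤ) = S⁻¹ ^ 2 := by rw [zpow_neg, inv_pow]; norm_cast
    rw [h1, pow_two]; rfl
  have hG1 : ∀ h : H,
      ∑ i ∈ (ℛ k h).index, S.symm ((ℛ k h).right i) * (ℛ k h).left i
        = Coalgebra.counit (R := k) h • (1 : H) :=
    fun h => Statement4Aux.sum_invAntipode_mul S hS h (ℛ k h)
  have hG2 : ∀ h : H,
      ∑ i ∈ (ℛ k h).index, (ℛ k h).right i * S.symm ((ℛ k h).left i)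
        = Coalgebra.counit (R := k) h • (1 : H) :=
    fun h => Statement4Aux.sum_mul_invAntipode S hS h (ℛ k h)
  have hflip : ∀ (f : A →ₗ[k] A) (g : B →ₗ[k] B) (z : A ⊗[k] B),
      TensorProduct.map g f (TensorProduct.comm k A B z)
        = TensorProduct.comm k A B (TensorProduct.map f g z) := by
    intro f g z
    have : (TensorProduct.map g f) ∘ₗ (TensorProduct.comm k A B).toLinearMap
        = (TensorProduct.comm k A B).toLinearMap ∘ₗ TensorProduct.map f g :=
      TensorProduct.ext' fun a b => rfl
    exact LinearMap.congr_fun this z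
  have hconv : ∀ h : H,
      diagAct k H (β ∘ₗ (S ^ (-2 : ℤ)).toLinearMap) α h (TensorProduct.comm k A B x)
        = TensorProduct.comm k A B
            (∑ i ∈ (ℛ k h).index,
              TensorProduct.map (α ((ℛ k h).right i))
                (β (S.symm (S.symm ((ℛ k h).left i)))) x) := by
    intro h
    rw [Statement4Aux.diagAct_repr (β ∘ₗ (S ^ (-2 : ℤ)).toLinearMap) α (ℛ k h)
      (TensorProduct.comm k A B x), map_sum]
    refine Finset.sum_congr rfl fun i _ => ?_
    rw [LinearMap.comp_apply, hP]
    exact hflip _ _ x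
  constructor
  · intro hx h
    rw [hconv h,
      Statement4Aux.key_lemma α β hα1 hαm hβ1 hβm S hG1 hG2 x hx h, map_smul]
  · intro hy h
    refine Statement4Aux.back_lemma α β hα1 hαm S hS hG1 x ?_ h
    intro h'
    apply (TensorProduct.comm k A B).injective
    rw [← hconv h', hy h', map_smul]
end

section
/- Let H be a Hopf algebra over a field k, M a left H-module and right H-comodule satisfying the stability condition m₍₁₎·m₍₀₎ = m for all m ∈ M, and V a left H-module. Then for every H-module map f : M ⊗ V → k (with diagonal action on M ⊗ V and trivial action on k), one has f(m₍₀₎ ⊗ S(m₍₁₎)v) = f(m ⊗ v) for all m ∈ M, v ∈ V. -/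
open TensorProduct

set_option maxHeartbeats 1000000 in
set_option synthInstance.maxHeartbeats 200000 in
/-- Key lemma: for an `H`-linear `f : M ⊗ V → k`, one has
`f(n ⊗ S(h)v) = f(hn ⊗ v)` for all `h, n, v`. -/
theorem key_lemma
    (k : Type) [Field k] (H : Type) [Ring H] [HopfAlgebra k H]
    (M : Type) [AddCommGroup M] [Module k M] [Module H M]
    [IsScalarTower k H M] [SMulCommClass k H M]
    (V : Type) [AddCommGroup V] [Module k V] [Module H V]
    [IsScalarTower k H V] [SMulCommClass k H V]
    (f : M ⊗[k] V →ₗ[k] k)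
    (hf : ∀ (h : H) (x : M ⊗[k] V),
      f (diagAct k H (smulL k H M) (smulL k H V) h x) = Coalgebra.counit (R := k) h • f x)
    (n : M) (v : V) (h : H) :
    f (n ⊗ₜ[k] (HopfAlgebra.antipode (R := k) h • v)) = f ((h • n) ⊗ₜ[k] v) := by
  classical
  set S : H →ₗ[k] H := HopfAlgebra.antipode (R := k) with hS
  set φ : H →ₗ[k] M := (smulL k H M).flip n with hφ
  set ψ : H →ₗ[k] V := ((smulL k H V).flip v) ∘ₗ S with hψ
  set L : H →ₗ[k] k := f ∘ₗ (TensorProduct.mk k M V n) ∘ₗ ψ with hL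
  set L1 : H →ₗ[k] k := f ∘ₗ ((TensorProduct.mk k M V).flip v) ∘ₗ φ with hL1
  set K : H ⊗[k] H →ₗ[k] k :=
    f ∘ₗ (TensorProduct.lift (diagAct k H (smulL k H M) (smulL k H V))) ∘ₗ
      (LinearMap.lTensor H ((TensorProduct.mk k M V n) ∘ₗ ψ)) with hK
  set J : H ⊗[k] (H ⊗[k] H) →ₗ[k] k :=
    f ∘ₗ TensorProduct.map φ ((actM k H V) ∘ₗ LinearMap.lTensor H ψ) with hJ
  set D : H ⊗[k] H →ₗ[k] k :=
    LinearMap.mul' k k ∘ₗ TensorProduct.map L1 (Coalgebra.counit (R := k)) with hD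
  -- Step 1: K = mul' ∘ (counit ⊗ L)
  have step1 : K = LinearMap.mul' k k ∘ₗ TensorProduct.map (Coalgebra.counit (R := k)) L := by
    apply TensorProduct.ext'
    intro x y
    simp only [hK, hL, LinearMap.comp_apply, LinearMap.lTensor_tmul,
      TensorProduct.lift.tmul, TensorProduct.map_tmul, TensorProduct.mk_apply,
      LinearMap.mul'_apply]
    rw [hf x (n ⊗ₜ[k] ψ y)]
    simp [smul_eq_mul]
  -- Step 2: K ∘ comul = L (pointwise)
  have step2 : ∀ a : H, K (Coalgebra.comul (R := k) a) = L a := by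
    intro a
    have hmap : TensorProduct.map (Coalgebra.counit (R := k) (A := H)) L
        = (LinearMap.lTensor k L) ∘ₗ ((Coalgebra.counit (R := k) (A := H)).rTensor H) := by
      apply TensorProduct.ext'
      intro x y
      simp
    rw [step1, LinearMap.comp_apply, hmap, LinearMap.comp_apply,
      Coalgebra.rTensor_counit_comul]
    simp
  -- Step 3: K = J ∘ assoc ∘ (comul ⊗ id)
  have step3 : K = J ∘ₗ (TensorProduct.assoc k H H H).toLinearMap ∘ₗ
      ((Coalgebra.comul (R := k)).rTensor H) := by
    apply TensorProduct.ext'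
    intro x y
    simp only [hK, LinearMap.comp_apply, LinearMap.lTensor_tmul, LinearMap.rTensor_tmul,
      TensorProduct.lift.tmul, TensorProduct.mk_apply, diagAct]
    generalize Coalgebra.comul (R := k) x = t
    induction t using TensorProduct.induction_on with
    | zero => simp
    | tmul a b =>
        simp only [TensorProduct.map_tmul, TensorProduct.homTensorHomMap_apply,
          TensorProduct.assoc_tmul, hJ, LinearMap.comp_apply, LinearMap.lTensor_tmul,
          TensorProduct.map_tmul]
        congr 1 <;> simp [actM, smulL, hφ]
    | add s t hs ht =>
        simp only [map_add, TensorProduct.add_tmul, LinearMap.add_apply, map_add]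
        rw [hs, ht]
  -- Step 4: J ∘ (id ⊗ comul) = D
  have hinner : (actM k H V) ∘ₗ LinearMap.lTensor H ψ
      = ((smulL k H V).flip v) ∘ₗ (LinearMap.mul' k H) ∘ₗ (S.lTensor H) := by
    apply TensorProduct.ext'
    intro x y
    simp [actM, smulL, hψ, mul_smul]
  have step4 : J ∘ₗ ((Coalgebra.comul (R := k)).lTensor H) = D := by
    apply TensorProduct.ext'
    intro x y
    simp only [hJ, hD, LinearMap.comp_apply, LinearMap.lTensor_tmul,
      TensorProduct.map_tmul, hinner, LinearMap.mul'_apply]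
    rw [HopfAlgebra.mul_antipode_lTensor_comul_apply]
    simp only [smulL, LinearMap.flip_apply, LinearMap.coe_mk, AddHom.coe_mk]
    rw [algebraMap_smul, TensorProduct.tmul_smul, map_smul]
    have hL1x : L1 x = f (φ x ⊗ₜ[k] v) := by simp [hL1]
    rw [hL1x, smul_eq_mul, mul_comm]
  -- Step 5: D ∘ comul = L1 (pointwise)
  have step5 : ∀ a : H, D (Coalgebra.comul (R := k) a) = L1 a := by
    intro a
    have hmap : TensorProduct.map L1 (Coalgebra.counit (R := k) (A := H))
        = (L1.rTensor k) ∘ₗ ((Coalgebra.counit (R := k) (A := H)).lTensor H) := by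
      apply TensorProduct.ext'
      intro x y
      simp
    rw [hD, LinearMap.comp_apply, hmap, LinearMap.comp_apply,
      Coalgebra.lTensor_counit_comul]
    simp
  -- Put everything together
  have chain : L h = L1 h := by
    rw [← step2 h, step3, ← step5 h, ← step4]
    simp only [LinearMap.comp_apply, LinearEquiv.coe_coe]
    rw [Coalgebra.coassoc_apply]
  have lhs : f (n ⊗ₜ[k] (HopfAlgebra.antipode (R := k) h • v)) = L h := by
    simp [hL, hψ, hS, smulL]
  have rhs : f ((h • n) ⊗ₜ[k] v) = L1 h := by
    simp [hL1, hφ, smulL]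
  rw [lhs, rhs, chain]

/-- if `M` is stable (`m₍₁₎m₍₀₎ = m`) then any `H`-linear `f : M ⊗ V → k`
satisfies `f(m₍₀₎ ⊗ S(m₍₁₎)v) = f(m ⊗ v)`. -/
theorem statement7
    (k : Type) [Field k] (H : Type) [Ring H] [HopfAlgebra k H]
    (M : Type) [AddCommGroup M] [Module k M] [Module H M]
    [IsScalarTower k H M] [SMulCommClass k H M]
    (ρ : M →ₗ[k] M ⊗[k] H)
    (hstab : ∀ m : M, stabMap k H ρ LinearMap.id m = m)
    (V : Type) [AddCommGroup V] [Module k V] [Module H V]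
    [IsScalarTower k H V] [SMulCommClass k H V]
    (f : M ⊗[k] V →ₗ[k] k)
    (hf : ∀ (h : H) (x : M ⊗[k] V),
      f (diagAct k H (smulL k H M) (smulL k H V) h x) = Coalgebra.counit (R := k) h • f x) :
    ∀ (m : M) (v : V),
      f (tauZero k H ρ (actM k H V) (HopfAlgebra.antipode (R := k)) (m ⊗ₜ[k] v)) =
        f (m ⊗ₜ[k] v) := by
  intro m v
  have claim : ∀ t : M ⊗[k] H,
      f ((LinearMap.lTensor M ((actM k H V) ∘ₗ
            LinearMap.rTensor V (HopfAlgebra.antipode (R := k))))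
          ((TensorProduct.assoc k M H V) (t ⊗ₜ[k] v)))
      = f ((actM k H M ((LinearMap.rTensor M (LinearMap.id (R := k) (M := H)))
          ((TensorProduct.comm k M H) t))) ⊗ₜ[k] v) := by
    intro t
    induction t using TensorProduct.induction_on with
    | zero => simp
    | tmul n h =>
        simp only [TensorProduct.assoc_tmul, LinearMap.lTensor_tmul, LinearMap.comp_apply,
          LinearMap.rTensor_tmul, TensorProduct.comm_tmul, LinearMap.id_coe, id_eq]
        have : actM k H V ((HopfAlgebra.antipode (R := k) h) ⊗ₜ[k] v)
            = HopfAlgebra.antipode (R := k) h • v := by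
          simp [actM, smulL]
        rw [this, key_lemma k H M V f hf n v h]
        congr 1 <;> simp [actM, smulL]
    | add s t hs ht =>
        simp only [TensorProduct.add_tmul, map_add, LinearMap.add_apply] at *
        rw [hs, ht]
  have expand : tauZero k H ρ (actM k H V) (HopfAlgebra.antipode (R := k)) (m ⊗ₜ[k] v)
      = (LinearMap.lTensor M ((actM k H V) ∘ₗ
            LinearMap.rTensor V (HopfAlgebra.antipode (R := k))))
          ((TensorProduct.assoc k M H V) ((ρ m) ⊗ₜ[k] v)) := by
    simp [tauZero]
  rw [expand, claim (ρ m)]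
  have := hstab m
  simp only [stabMap, LinearMap.comp_apply, LinearEquiv.coe_coe] at this
  rw [this]
end

section
/- Let C be a monoidal category and F : C → Vec a symmetric 2-trace, i.e. F is equipped with natural isomorphisms ι_c : F(- ⊗ c) ≅ F(c ⊗ -) satisfying ι_c(1) = F(right-unitor composed with inverse left-unitor : 1 ⊗ c ≅ c ⊗ 1). Then for all objects c, c' of C, the composite ι_c(c') ∘ ι_{c'}(c) : F(c ⊗ c') → F(c ⊗ c') is the identity. -/
open CategoryTheory MonoidalCategory

/-- A symmetric 2-trace on a monoidal category `C`: a functor `F : C ⥤ Vec` together with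
isomorphisms `ι c x : F(x ⊗ c) ≅ F(c ⊗ x)`, natural in both variables, compatible with the
tensor product (centrality of `F` in `Fun(C, Vec)`), and symmetric:
`ι c 𝟙 = F(1 ⊗ c ≅ c ⊗ 1)`. -/
structure IsSymmTwoTrace {k : Type} [Field k] {C : Type*} [Category C] [MonoidalCategory C]
    (F : C ⥤ ModuleCat k) (ι : ∀ c x : C, F.obj (x ⊗ c) ≅ F.obj (c ⊗ x)) : Prop where
  nat_x : ∀ (c : C) {x y : C} (f : x ⟶ y),
    F.map (f ▷ c) ≫ (ι c y).hom = (ι c x).hom ≫ F.map (c ◁ f)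
  nat_c : ∀ {c d : C} (g : c ⟶ d) (x : C),
    F.map (x ◁ g) ≫ (ι d x).hom = (ι c x).hom ≫ F.map (g ▷ x)
  mul : ∀ c c' x : C,
    (ι (c ⊗ c') x).hom =
      F.map (α_ x c c').inv ≫ (ι c' (x ⊗ c)).hom ≫ F.map (α_ c' x c).inv ≫
        (ι c (c' ⊗ x)).hom ≫ F.map (α_ c c' x).inv
  sym : ∀ c : C, (ι c (𝟙_ C)).hom = F.map ((λ_ c).hom ≫ (ρ_ c).inv)

/-- for a symmetric 2-trace `(F, ι)`, the composite
`ι_c(c') ∘ ι_{c'}(c) : F(c ⊗ c') → F(c ⊗ c')` is the identity. -/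
theorem statement11
    (k : Type) [Field k] (C : Type*) [Category C] [MonoidalCategory C]
    (F : C ⥤ ModuleCat k) (ι : ∀ c x : C, F.obj (x ⊗ c) ≅ F.obj (c ⊗ x))
    (hF : IsSymmTwoTrace F ι) :
    ∀ c c' : C, (ι c' c).hom ≫ (ι c c').hom = 𝟙 (F.obj (c ⊗ c')) := by
  intro c c'
  have h := hF.mul c c' (𝟙_ C)
  rw [hF.sym] at h
  have e1 : (ι c' ((𝟙_ C) ⊗ c)).hom
      = F.map ((λ_ c).hom ▷ c') ≫ (ι c' c).hom ≫ F.map (c' ◁ (λ_ c).inv) := by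
    rw [← cancel_mono (F.map (c' ◁ (λ_ c).hom))]
    rw [Category.assoc, Category.assoc, ← F.map_comp,
      ← MonoidalCategory.whiskerLeft_comp, Iso.inv_hom_id,
      MonoidalCategory.whiskerLeft_id, F.map_id, Category.comp_id]
    exact (hF.nat_x c' (λ_ c).hom).symm
  have e2 : (ι c (c' ⊗ 𝟙_ C)).hom
      = F.map ((ρ_ c').hom ▷ c) ≫ (ι c c').hom ≫ F.map (c ◁ (ρ_ c').inv) := by
    rw [← cancel_mono (F.map (c ◁ (ρ_ c').hom))]
    rw [Category.assoc, Category.assoc, ← F.map_comp,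
      ← MonoidalCategory.whiskerLeft_comp, Iso.inv_hom_id,
      MonoidalCategory.whiskerLeft_id, F.map_id, Category.comp_id]
    exact (hF.nat_x c (ρ_ c').hom).symm
  rw [e1, e2] at h
  rw [F.map_comp] at h
  simp only [Category.assoc] at h
  have hL : F.map (α_ (𝟙_ C) c c').inv ≫ F.map ((λ_ c).hom ▷ c')
      = F.map (λ_ (c ⊗ c')).hom := by
    rw [← F.map_comp]
    congr 1
    coherence
  have hM : F.map (c' ◁ (λ_ c).inv) ≫ F.map (α_ c' (𝟙_ C) c).inv ≫
      F.map ((ρ_ c').hom ▷ c) = 𝟙 (F.obj (c' ⊗ c)) := by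
    rw [← F.map_comp, ← F.map_comp, ← F.map_id]
    congr 1
    coherence
  have hR : F.map (c ◁ (ρ_ c').inv) ≫ F.map (α_ c c' (𝟙_ C)).inv
      = F.map (ρ_ (c ⊗ c')).inv := by
    rw [← F.map_comp]
    congr 1
    coherence
  rw [reassoc_of% hL, reassoc_of% hM, hR, cancel_epi] at h
  rw [← cancel_mono (F.map (ρ_ (c ⊗ c')).inv)]
  simpa using h.symm
end
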